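/- Let u ∈ W^{1,1}(0,1) with weight ρ positive and continuous, satisfying ∫₀¹ u ρ = 0, and suppose J_ρ(x) ≤ 1/4 for all x ∈ (0,1), where J_ρ(x) = (∫₀ˣρ)(∫ₓ¹ρ)/((∫₀¹ρ)ρ(x)). Then ∫₀¹ |u| ρ ≤ (1/2) ∫₀¹ |u'| ρ. -/

import Mathlib

open Real Set MeasureTheory


lemma pw_mul_int {φ f : ℝ → ℝ} (hφ : ContinuousOn φ (Icc 0 1))
    (hf : IntegrableOn f (Ioc 0 1)) : IntegrableOn (fun t => φ t * f t) (Ioc 0 1) := by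
  obtain ⟨M, hM⟩ := isCompact_Icc.exists_bound_of_continuousOn hφ
  refine Integrable.mono' (hf.norm.const_mul M)
    (((hφ.mono Ioc_subset_Icc_self).aestronglyMeasurable measurableSet_Ioc).mul
      hf.aestronglyMeasurable) ?_
  filter_upwards [ae_restrict_mem measurableSet_Ioc] with t ht
  calc ‖φ t * f t‖ = ‖φ t‖ * ‖f t‖ := norm_mul _ _
    _ ≤ M * ‖f t‖ := by
        have := hM t (Ioc_subset_Icc_self ht)
        exact mul_le_mul_of_nonneg_right this (norm_nonneg _)

lemma pw_swap {ρ f : ℝ → ℝ} (hρ : ContinuousOn ρ (Icc 0 1))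
    (hf : IntegrableOn f (Ioc 0 1)) :
    ∫ x in (0:ℝ)..1, ρ x * ∫ t in (0:ℝ)..x, f t
      = ∫ t in (0:ℝ)..1, (∫ x in t..(1:ℝ), ρ x) * f t := by
  have hρi : IntegrableOn ρ (Ioc 0 1) := (hρ.integrableOn_Icc).mono_set Ioc_subset_Icc_self
  set ν := volume.restrict (Ioc (0:ℝ) 1) with hν
  have hΦ : Integrable (Function.uncurry fun x t => if t ≤ x then ρ x * f t else 0)
      (ν.prod ν) := by
    have h1 : Integrable (fun q : ℝ × ℝ => ρ q.1 * f q.2) (ν.prod ν) := hρi.mul_prod hf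
    have h2 : (Function.uncurry fun x t => if t ≤ x then ρ x * f t else 0)
        = {q : ℝ × ℝ | q.2 ≤ q.1}.indicator (fun q => ρ q.1 * f q.2) := by
      ext q
      by_cases h : q.2 ≤ q.1 <;> simp [Function.uncurry, Set.indicator_apply, h]
    rw [h2]
    exact h1.indicator ((isClosed_le continuous_snd continuous_fst).measurableSet)
  have key := MeasureTheory.integral_integral_swap hΦ
  rw [intervalIntegral.integral_of_le zero_le_one, intervalIntegral.integral_of_le zero_le_one]
  have hl : ∫ x in Ioc (0:ℝ) 1, ρ x * ∫ t in (0:ℝ)..x, f t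
      = ∫ x, (∫ t, (if t ≤ x then ρ x * f t else 0) ∂ν) ∂ν := by
    refine setIntegral_congr_fun measurableSet_Ioc fun x hx => ?_
    have : (fun t => if t ≤ x then ρ x * f t else 0)
        = fun t => ρ x * (Iic x).indicator f t := by
      ext t; by_cases h : t ≤ x <;> simp [Set.indicator_apply, h]
    rw [this, MeasureTheory.integral_const_mul, hν, setIntegral_indicator measurableSet_Iic,
      Set.Ioc_inter_Iic, min_eq_right hx.2, intervalIntegral.integral_of_le hx.1.le]
  have hr : ∫ t in Ioc (0:ℝ) 1, (∫ x in t..(1:ℝ), ρ x) * f t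
      = ∫ t, (∫ x, (if t ≤ x then ρ x * f t else 0) ∂ν) ∂ν := by
    refine setIntegral_congr_fun measurableSet_Ioc fun t ht => ?_
    have h3 : (fun x => if t ≤ x then ρ x * f t else 0)
        = fun x => (Ici t).indicator ρ x * f t := by
      ext x; by_cases h : t ≤ x <;> simp [Set.indicator_apply, h]
    rw [h3, MeasureTheory.integral_mul_const, hν,
      setIntegral_indicator measurableSet_Ici]
    have h4 : Ioc (0:ℝ) 1 ∩ Ici t = Icc t 1 := by
      ext x
      simp only [mem_inter_iff, mem_Ioc, mem_Ici, mem_Icc]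
      exact ⟨fun ⟨⟨_, h1⟩, h2⟩ => ⟨h2, h1⟩, fun ⟨h1, h2⟩ => ⟨⟨lt_of_lt_of_le ht.1 h1, h2⟩, h1⟩⟩
    rw [h4, integral_Icc_eq_integral_Ioc, ← intervalIntegral.integral_of_le ht.2]
  rw [hl, hr]
  exact key

theorem stmt16 (ρ u u' : ℝ → ℝ)
    (hρc : ContinuousOn ρ (Icc 0 1))
    (hρpos : ∀ x ∈ Icc (0:ℝ) 1, 0 < ρ x)
    (hu : ∀ x ∈ Icc (0:ℝ) 1, HasDerivAt u (u' x) x)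
    (hu'int : IntervalIntegrable (fun x => |u' x| * ρ x) volume 0 1)
    (huint : IntervalIntegrable (fun x => |u x| * ρ x) volume 0 1)
    (hmean : ∫ x in (0:ℝ)..1, u x * ρ x = 0)
    (hJ : ∀ x ∈ Ioo (0:ℝ) 1,
      (∫ t in (0:ℝ)..x, ρ t) * (∫ t in x..(1:ℝ), ρ t) /
        ((∫ t in (0:ℝ)..(1:ℝ), ρ t) * ρ x) ≤ 1/4) :
    ∫ x in (0:ℝ)..1, |u x| * ρ x ≤ (1/2) * ∫ x in (0:ℝ)..1, |u' x| * ρ x := by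
  set R : ℝ := ∫ t in (0:ℝ)..1, ρ t with hR
  set F : ℝ → ℝ := fun x => ∫ t in (0:ℝ)..x, ρ t with hF
  -- basic facts about ρ and F
  have hsub : ∀ a b : ℝ, a ∈ Icc (0:ℝ) 1 → b ∈ Icc (0:ℝ) 1 → uIcc a b ⊆ Icc 0 1 :=
    fun a b ha hb => uIcc_subset_Icc ha hb
  have hρint : ∀ a b : ℝ, a ∈ Icc (0:ℝ) 1 → b ∈ Icc (0:ℝ) 1 →
      IntervalIntegrable ρ volume a b :=
    fun a b ha hb => (hρc.mono (hsub a b ha hb)).intervalIntegrable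
  have hFcont : ContinuousOn F (Icc 0 1) := by
    have := intervalIntegral.continuousOn_primitive_interval
      (a := 0) (b := 1) (μ := volume) (f := ρ) ?_
    · rwa [uIcc_of_le zero_le_one] at this
    · rw [uIcc_of_le zero_le_one]; exact hρc.integrableOn_Icc
  have hFd : ∀ x ∈ Ioo (0:ℝ) 1, HasDerivAt F (ρ x) x := by
    intro x hx
    have hxI : x ∈ Icc (0:ℝ) 1 := Ioo_subset_Icc_self hx
    refine intervalIntegral.integral_hasDerivAt_right (hρint 0 x (by simp) hxI)
      ⟨Ioo 0 1, Ioo_mem_nhds hx.1 hx.2,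
        (hρc.mono Ioo_subset_Icc_self).aestronglyMeasurable measurableSet_Ioo⟩
      (hρc.continuousAt (Icc_mem_nhds hx.1 hx.2))
  have hF0 : F 0 = 0 := intervalIntegral.integral_same
  have hρ0 : ∀ x ∈ Icc (0:ℝ) 1, 0 ≤ ρ x := fun x hx => (hρpos x hx).le
  have hFnn : ∀ t ∈ Icc (0:ℝ) 1, 0 ≤ F t := by
    intro t ht
    exact intervalIntegral.integral_nonneg ht.1
      (fun x hx => hρ0 x ⟨hx.1, hx.2.trans ht.2⟩)
  have hsplit : ∀ t ∈ Icc (0:ℝ) 1, F t + (∫ x in t..(1:ℝ), ρ x) = R :=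
    fun t ht => intervalIntegral.integral_add_adjacent_intervals
      (hρint 0 t (by simp) ht) (hρint t 1 ht (by simp))
  have hFle : ∀ t ∈ Icc (0:ℝ) 1, F t ≤ R := by
    intro t ht
    have h2 : 0 ≤ ∫ x in t..(1:ℝ), ρ x :=
      intervalIntegral.integral_nonneg ht.2 (fun x hx => hρ0 x ⟨ht.1.trans hx.1, hx.2⟩)
    linarith [hsplit t ht]
  have hRpos : (0:ℝ) < R :=
    intervalIntegral.intervalIntegral_pos_of_pos_on (hρint 0 1 (by simp) (by simp))
      (fun x hx => hρpos x (Ioo_subset_Icc_self hx)) zero_lt_one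
  have hJ2 : ∀ t ∈ Icc (0:ℝ) 1, F t * (R - F t) ≤ R / 4 * ρ t := by
    intro t ht
    rcases eq_or_lt_of_le ht.1 with h0 | h0
    · rw [← h0, hF0]
      have := hρ0 0 (by simp)
      nlinarith
    rcases eq_or_lt_of_le ht.2 with h1 | h1
    · have : F t = R := by rw [h1]
      rw [this]
      have := hρ0 t ht
      nlinarith
    · have hmem : t ∈ Ioo (0:ℝ) 1 := ⟨h0, h1⟩
      have := hJ t hmem
      have hden : 0 < R * ρ t := mul_pos hRpos (hρpos t ht)
      rw [div_le_iff₀ hden] at this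
      have : F t * (R - F t) ≤ 1 / 4 * (R * ρ t) := by
        have hs := hsplit t ht
        calc F t * (R - F t) = F t * (∫ x in t..(1:ℝ), ρ x) := by rw [← hs]; ring_nf
          _ ≤ 1 / 4 * (R * ρ t) := this
      linarith
  -- lower bound on ρ and integrability of u'
  obtain ⟨z, hz, hzmin⟩ := isCompact_Icc.exists_isMinOn
    (Set.nonempty_Icc.2 zero_le_one) hρc
  set c : ℝ := ρ z with hcdef
  have hc0 : 0 < c := hρpos z hz
  have hu'int' : IntegrableOn (fun x => |u' x| * ρ x) (Ioc 0 1) := by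
    rwa [intervalIntegrable_iff_integrableOn_Ioc_of_le zero_le_one] at hu'int
  have hu'm : AEStronglyMeasurable u' (volume.restrict (Ioc 0 1)) := by
    have h2 : ∀ᵐ x ∂(volume.restrict (Ioc (0:ℝ) 1)), x ≠ 1 := by
      refine ae_iff.mpr (le_antisymm (le_trans (Measure.restrict_apply_le _ _) ?_) zero_le)
      have : {a : ℝ | ¬a ≠ 1} = {1} := by ext a; simp
      rw [this, Real.volume_singleton]
    have h1 : ∀ᵐ x ∂(volume.restrict (Ioc (0:ℝ) 1)), x ∈ Ioc (0:ℝ) 1 :=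
      ae_restrict_mem measurableSet_Ioc
    refine (measurable_deriv u).aestronglyMeasurable.congr ?_
    filter_upwards [h1, h2] with x hx hx1
    exact ((hu x ⟨hx.1.le, hx.2⟩).deriv).symm ▸
      (hu x ⟨hx.1.le, hx.2⟩).deriv
  have hclow : ∀ x ∈ Icc (0:ℝ) 1, c ≤ ρ x := fun x hx => hzmin hx
  have hu'on : IntegrableOn u' (Ioc 0 1) := by
    refine Integrable.mono' (hu'int'.const_mul c⁻¹) hu'm ?_
    filter_upwards [ae_restrict_mem measurableSet_Ioc] with t ht
    have h1 : c ≤ ρ t := hclow t (Ioc_subset_Icc_self ht)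
    rw [Real.norm_eq_abs]
    rw [show c⁻¹ * (|u' t| * ρ t) = (ρ t / c) * |u' t| by ring]
    have h2 : (1:ℝ) ≤ ρ t / c := (one_le_div hc0).mpr h1
    nlinarith [abs_nonneg (u' t)]
  have habs : IntegrableOn (fun t => |u' t|) (Ioc 0 1) := hu'on.abs
  have hii : ∀ (g : ℝ → ℝ), IntegrableOn g (Ioc 0 1) → ∀ a b : ℝ, a ∈ Icc (0:ℝ) 1 →
      b ∈ Icc (0:ℝ) 1 → IntervalIntegrable g volume a b := by
    intro g hg a b ha hb
    have h01 : IntervalIntegrable g volume 0 1 :=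
      (intervalIntegrable_iff_integrableOn_Ioc_of_le zero_le_one).mpr hg
    exact h01.mono_set (by rw [uIcc_of_le zero_le_one]; exact hsub a b ha hb)
  have hFUn : IntegrableOn (fun t => F t * u' t) (Ioc 0 1) := pw_mul_int hFcont hu'on
  have hRFU : IntegrableOn (fun t => (R - F t) * u' t) (Ioc 0 1) :=
    pw_mul_int (continuousOn_const.sub hFcont) hu'on
  have hFUa : IntegrableOn (fun t => F t * |u' t|) (Ioc 0 1) := pw_mul_int hFcont habs
  have hRFUa : IntegrableOn (fun t => (R - F t) * |u' t|) (Ioc 0 1) :=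
    pw_mul_int (continuousOn_const.sub hFcont) habs
  have hucont : ContinuousOn u (Icc 0 1) :=
    fun x hx => (hu x hx).continuousAt.continuousWithinAt
  have huρint : IntegrableOn (fun t => u t * ρ t) (Ioc 0 1) :=
    ((hucont.mul hρc).integrableOn_Icc).mono_set Ioc_subset_Icc_self
  have hPcont : ContinuousOn (fun x => ∫ t in (0:ℝ)..x, u t * ρ t) (Icc 0 1) := by
    have := intervalIntegral.continuousOn_primitive_interval
      (a := 0) (b := 1) (μ := volume) (f := fun t => u t * ρ t) ?_
    · rwa [uIcc_of_le zero_le_one] at this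
    · rw [uIcc_of_le zero_le_one]; exact (hucont.mul hρc).integrableOn_Icc
  -- Step 1: the key consequence of zero mean
  have hB1 : ∫ t in (0:ℝ)..1, (R - F t) * u' t = -(R * u 0) := by
    have := intervalIntegral.integral_eq_sub_of_hasDeriv_right_of_le zero_le_one
      (f := fun t => (R - F t) * u t + ∫ s in (0:ℝ)..t, u s * ρ s)
      (f' := fun t => (R - F t) * u' t)
      (((continuousOn_const.sub hFcont).mul hucont).add hPcont)
      ?_ (hii _ hRFU 0 1 (by simp) (by simp))
    · rw [this]
      show (R - F 1) * u 1 + (∫ s in (0:ℝ)..(1:ℝ), u s * ρ s)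
        - ((R - F 0) * u 0 + ∫ s in (0:ℝ)..(0:ℝ), u s * ρ s) = -(R * u 0)
      rw [hF0, hmean, intervalIntegral.integral_same, show F 1 = R from rfl]
      ring
    · intro x hx
      have hxI : x ∈ Icc (0:ℝ) 1 := Ioo_subset_Icc_self hx
      have h1 : HasDerivAt (fun t => (R - F t) * u t)
          ((0 - ρ x) * u x + (R - F x) * u' x) x :=
        (((hasDerivAt_const x R).sub (hFd x hx)).mul (hu x hxI))
      have h2 : HasDerivAt (fun t => ∫ s in (0:ℝ)..t, u s * ρ s) (u x * ρ x) x := by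
        refine intervalIntegral.integral_hasDerivAt_right
          (hii _ huρint 0 x (by simp) hxI)
          ⟨Ioo 0 1, Ioo_mem_nhds hx.1 hx.2,
            (((hucont.mul hρc)).mono Ioo_subset_Icc_self).aestronglyMeasurable
              measurableSet_Ioo⟩
          ((hucont.mul hρc).continuousAt (Icc_mem_nhds hx.1 hx.2))
      have h3 := h1.add h2
      have : (0 - ρ x) * u x + (R - F x) * u' x + u x * ρ x = (R - F x) * u' x := by ring
      rw [this] at h3
      exact h3.hasDerivWithinAt
  -- Step 2: pointwise bound
  have hkey : ∀ x ∈ Icc (0:ℝ) 1, R * |u x| ≤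
      (∫ t in (0:ℝ)..x, F t * |u' t|) + ∫ t in x..(1:ℝ), (R - F t) * |u' t| := by
    intro x hx
    have hftc : ∫ t in (0:ℝ)..x, u' t = u x - u 0 :=
      intervalIntegral.integral_eq_sub_of_hasDerivAt
        (fun t ht => hu t (hsub 0 x (by simp) hx ht)) (hii _ hu'on 0 x (by simp) hx)
    have hadj : (∫ t in (0:ℝ)..x, (R - F t) * u' t) + ∫ t in x..(1:ℝ), (R - F t) * u' t
        = -(R * u 0) := by
      rw [intervalIntegral.integral_add_adjacent_intervals (hii _ hRFU 0 x (by simp) hx)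
        (hii _ hRFU x 1 hx (by simp))]
      exact hB1
    have hsum : (∫ t in (0:ℝ)..x, F t * u' t) + ∫ t in (0:ℝ)..x, (R - F t) * u' t
        = R * (u x - u 0) := by
      rw [← intervalIntegral.integral_add (hii _ hFUn 0 x (by simp) hx)
        (hii _ hRFU 0 x (by simp) hx)]
      calc ∫ t in (0:ℝ)..x, (F t * u' t + (R - F t) * u' t)
          = ∫ t in (0:ℝ)..x, R * u' t :=
            intervalIntegral.integral_congr (fun t _ => by ring)
        _ = R * (u x - u 0) := by rw [intervalIntegral.integral_const_mul, hftc]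
    have hrep : R * u x = (∫ t in (0:ℝ)..x, F t * u' t)
        - ∫ t in x..(1:ℝ), (R - F t) * u' t := by linarith
    have h1 : |∫ t in (0:ℝ)..x, F t * u' t| ≤ ∫ t in (0:ℝ)..x, F t * |u' t| := by
      refine le_trans (intervalIntegral.abs_integral_le_integral_abs hx.1) ?_
      refine le_of_eq (intervalIntegral.integral_congr ?_)
      intro t ht
      rw [uIcc_of_le hx.1] at ht
      have htI : t ∈ Icc (0:ℝ) 1 := ⟨ht.1, ht.2.trans hx.2⟩
      simp [abs_mul, abs_of_nonneg (hFnn t htI)]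
    have h2 : |∫ t in x..(1:ℝ), (R - F t) * u' t|
        ≤ ∫ t in x..(1:ℝ), (R - F t) * |u' t| := by
      refine le_trans (intervalIntegral.abs_integral_le_integral_abs hx.2) ?_
      refine le_of_eq (intervalIntegral.integral_congr ?_)
      intro t ht
      rw [uIcc_of_le hx.2] at ht
      have htI : t ∈ Icc (0:ℝ) 1 := ⟨hx.1.trans ht.1, ht.2⟩
      simp [abs_mul, abs_of_nonneg (sub_nonneg.mpr (hFle t htI))]
    calc R * |u x| = |R * u x| := by rw [abs_mul, abs_of_nonneg hRpos.le]
      _ = |(∫ t in (0:ℝ)..x, F t * u' t) - ∫ t in x..(1:ℝ), (R - F t) * u' t| := by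
          rw [hrep]
      _ ≤ |∫ t in (0:ℝ)..x, F t * u' t| + |∫ t in x..(1:ℝ), (R - F t) * u' t| :=
          abs_sub _ _
      _ ≤ _ := add_le_add h1 h2
  -- continuity of the primitives
  have hFUaIcc : IntegrableOn (fun t => F t * |u' t|) (Icc 0 1) := by
    rw [integrableOn_Icc_iff_integrableOn_Ioc]; exact hFUa
  have hRFUaIcc : IntegrableOn (fun t => (R - F t) * |u' t|) (Icc 0 1) := by
    rw [integrableOn_Icc_iff_integrableOn_Ioc]; exact hRFUa
  have hAbc : ContinuousOn (fun x => ∫ t in (0:ℝ)..x, F t * |u' t|) (Icc 0 1) := by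
    have := intervalIntegral.continuousOn_primitive_interval
      (a := 0) (b := 1) (μ := volume) (f := fun t => F t * |u' t|) ?_
    · rwa [uIcc_of_le zero_le_one] at this
    · rw [uIcc_of_le zero_le_one]; exact hFUaIcc
  have hBbc : ContinuousOn (fun x => ∫ t in x..(1:ℝ), (R - F t) * |u' t|) (Icc 0 1) := by
    have := intervalIntegral.continuousOn_primitive_interval_left
      (a := 0) (b := 1) (μ := volume) (f := fun t => (R - F t) * |u' t|) ?_
    · rwa [uIcc_of_le zero_le_one] at this
    · rw [uIcc_of_le zero_le_one]; exact hRFUaIcc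
  -- Step 3: integrate the pointwise bound against ρ
  have hGint : IntervalIntegrable (fun x => ((∫ t in (0:ℝ)..x, F t * |u' t|)
      + ∫ t in x..(1:ℝ), (R - F t) * |u' t|) * ρ x) volume 0 1 := by
    apply ContinuousOn.intervalIntegrable
    rw [uIcc_of_le zero_le_one]
    exact (hAbc.add hBbc).mul hρc
  have hmono : R * ∫ x in (0:ℝ)..1, |u x| * ρ x
      ≤ ∫ x in (0:ℝ)..1, ((∫ t in (0:ℝ)..x, F t * |u' t|)
        + ∫ t in x..(1:ℝ), (R - F t) * |u' t|) * ρ x := by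
    rw [← intervalIntegral.integral_const_mul]
    refine intervalIntegral.integral_mono_on zero_le_one (huint.const_mul R) hGint ?_
    intro x hx
    have := hkey x hx
    have hρx := hρ0 x hx
    calc R * (|u x| * ρ x) = (R * |u x|) * ρ x := by ring
      _ ≤ _ := mul_le_mul_of_nonneg_right this hρx
  -- Step 4: Fubini
  have hBbprim : ContinuousOn (fun x => ∫ t in (0:ℝ)..x, (R - F t) * |u' t|) (Icc 0 1) := by
    have := intervalIntegral.continuousOn_primitive_interval
      (a := 0) (b := 1) (μ := volume) (f := fun t => (R - F t) * |u' t|) ?_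
    · rwa [uIcc_of_le zero_le_one] at this
    · rw [uIcc_of_le zero_le_one]; exact hRFUaIcc
  have hint1 : IntervalIntegrable
      (fun x => ρ x * ∫ t in (0:ℝ)..x, F t * |u' t|) volume 0 1 := by
    apply ContinuousOn.intervalIntegrable
    rw [uIcc_of_le zero_le_one]; exact hρc.mul hAbc
  have hint2 : IntervalIntegrable
      (fun x => ρ x * ∫ t in (0:ℝ)..x, (R - F t) * |u' t|) volume 0 1 := by
    apply ContinuousOn.intervalIntegrable
    rw [uIcc_of_le zero_le_one]; exact hρc.mul hBbprim
  have hint3 : IntervalIntegrable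
      (fun x => ρ x * ∫ t in x..(1:ℝ), (R - F t) * |u' t|) volume 0 1 := by
    apply ContinuousOn.intervalIntegrable
    rw [uIcc_of_le zero_le_one]; exact hρc.mul hBbc
  have htail : ∀ t ∈ Icc (0:ℝ) 1, (∫ x in t..(1:ℝ), ρ x) = R - F t := by
    intro t ht
    have := hsplit t ht
    linarith
  have hsw1 : ∫ x in (0:ℝ)..1, ρ x * ∫ t in (0:ℝ)..x, F t * |u' t|
      = ∫ t in (0:ℝ)..1, (R - F t) * (F t * |u' t|) := by
    rw [pw_swap hρc hFUa]
    refine intervalIntegral.integral_congr fun t ht => ?_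
    rw [uIcc_of_le zero_le_one] at ht
    rw [htail t ht]
  have hadj2 : ∀ x ∈ Icc (0:ℝ) 1, (∫ t in x..(1:ℝ), (R - F t) * |u' t|)
      = (∫ t in (0:ℝ)..1, (R - F t) * |u' t|)
        - ∫ t in (0:ℝ)..x, (R - F t) * |u' t| := by
    intro x hx
    have := intervalIntegral.integral_add_adjacent_intervals
      (hii _ hRFUa 0 x (by simp) hx) (hii _ hRFUa x 1 hx (by simp))
    linarith
  have hsw2 : ∫ x in (0:ℝ)..1, ρ x * ∫ t in x..(1:ℝ), (R - F t) * |u' t|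
      = ∫ t in (0:ℝ)..1, F t * ((R - F t) * |u' t|) := by
    have iconst : IntervalIntegrable
        (fun x => ρ x * ∫ t in (0:ℝ)..1, (R - F t) * |u' t|) volume 0 1 :=
      (hρint 0 1 (by simp) (by simp)).mul_const _
    have e1 : ∫ x in (0:ℝ)..1, ρ x * ∫ t in x..(1:ℝ), (R - F t) * |u' t|
        = (∫ x in (0:ℝ)..1, ρ x * ∫ t in (0:ℝ)..1, (R - F t) * |u' t|)
          - ∫ x in (0:ℝ)..1, ρ x * ∫ t in (0:ℝ)..x, (R - F t) * |u' t| := by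
      rw [← intervalIntegral.integral_sub iconst hint2]
      refine intervalIntegral.integral_congr fun x hx => ?_
      rw [uIcc_of_le zero_le_one] at hx
      rw [hadj2 x hx]; ring
    rw [e1, pw_swap hρc hRFUa, intervalIntegral.integral_mul_const]
    have e2 : ∫ t in (0:ℝ)..1, (∫ x in t..(1:ℝ), ρ x) * ((R - F t) * |u' t|)
        = ∫ t in (0:ℝ)..1, (R - F t) * ((R - F t) * |u' t|) := by
      refine intervalIntegral.integral_congr fun t ht => ?_
      rw [uIcc_of_le zero_le_one] at ht
      rw [htail t ht]
    rw [e2]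
    have e3 : (∫ x in (0:ℝ)..1, ρ x) * (∫ t in (0:ℝ)..1, (R - F t) * |u' t|)
        = ∫ t in (0:ℝ)..1, R * ((R - F t) * |u' t|) := by
      rw [intervalIntegral.integral_const_mul]
    have iRR : IntervalIntegrable (fun t => R * ((R - F t) * |u' t|)) volume 0 1 :=
      (hii _ hRFUa 0 1 (by simp) (by simp)).const_mul R
    have iFF : IntervalIntegrable (fun t => (R - F t) * ((R - F t) * |u' t|)) volume 0 1 :=
      hii _ (pw_mul_int (continuousOn_const.sub hFcont) hRFUa) 0 1 (by simp) (by simp)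
    rw [e3, ← intervalIntegral.integral_sub iRR iFF]
    exact intervalIntegral.integral_congr fun t ht => by ring
  -- Step 5: apply the J bound
  have i1 : IntervalIntegrable (fun t => (R - F t) * (F t * |u' t|)) volume 0 1 :=
    hii _ (pw_mul_int (continuousOn_const.sub hFcont) hFUa) 0 1 (by simp) (by simp)
  have i2 : IntervalIntegrable (fun t => F t * ((R - F t) * |u' t|)) volume 0 1 :=
    hii _ (pw_mul_int hFcont hRFUa) 0 1 (by simp) (by simp)
  have hfive : (∫ t in (0:ℝ)..1, (R - F t) * (F t * |u' t|))
      + (∫ t in (0:ℝ)..1, F t * ((R - F t) * |u' t|))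
      ≤ (R / 2) * ∫ x in (0:ℝ)..1, |u' x| * ρ x := by
    rw [← intervalIntegral.integral_add i1 i2, ← intervalIntegral.integral_const_mul]
    refine intervalIntegral.integral_mono_on zero_le_one (i1.add i2)
      (hu'int.const_mul (R / 2)) ?_
    intro t ht
    have h := hJ2 t ht
    have ha := abs_nonneg (u' t)
    nlinarith
  -- combine
  have hsplitG : ∫ x in (0:ℝ)..1, ((∫ t in (0:ℝ)..x, F t * |u' t|)
      + ∫ t in x..(1:ℝ), (R - F t) * |u' t|) * ρ x
      = (∫ x in (0:ℝ)..1, ρ x * ∫ t in (0:ℝ)..x, F t * |u' t|)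
        + ∫ x in (0:ℝ)..1, ρ x * ∫ t in x..(1:ℝ), (R - F t) * |u' t| := by
    rw [← intervalIntegral.integral_add hint1 hint3]
    exact intervalIntegral.integral_congr fun x _ => by ring
  have hfinal : R * ∫ x in (0:ℝ)..1, |u x| * ρ x
      ≤ (R / 2) * ∫ x in (0:ℝ)..1, |u' x| * ρ x := by
    refine le_trans hmono ?_
    rw [hsplitG, hsw1, hsw2]
    exact hfive
  have heq : (R / 2) * ∫ x in (0:ℝ)..1, |u' x| * ρ x
      = R * ((1 / 2) * ∫ x in (0:ℝ)..1, |u' x| * ρ x) := by ring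
  exact le_of_mul_le_mul_left (by linarith) hRpos
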